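/- Universal property of the soft inductive limit of normed spaces: Let (E, j) be a soft inductive system of normed spaces with limit space E_∞ and canonical map j-lim. If α_n : E_n → F is a net of linear contractions into a Banach space F such that for every j-convergent net (a_n) the net (α_n(a_n)) is Cauchy in F, then there exists a unique linear contraction α_∞ : E_∞ → F with α_∞(j-lim_n a_n) = lim_n α_n(a_n) for all j-convergent nets (a_n). -/

import Mathlib

open Filter Topology

section SoftSystems

variable {ι : Type*} [Preorder ι] {E : ι → Type*} [∀ n, NormedAddCommGroup (E n)]
  [∀ n, NormedSpace ℂ (E n)]

/-- A *soft inductive system* of normed spaces: the connecting maps `j n m : E m → E n`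
(for `m ≤ n`) are linear contractions and are asymptotically transitive:
`lim_m limsup_n ‖(j n l − j n m ∘ j m l) a‖ = 0` for every `l` and `a : E l`. -/
def IsSoftSystem (j : ∀ n m, E m →L[ℂ] E n) : Prop :=
  (∀ n m, m ≤ n → ‖j n m‖ ≤ 1) ∧
  ∀ (l : ι) (a : E l),
    Tendsto (fun m => limsup (fun n => ‖j n l a - j n m (j m l a)‖) atTop) atTop (𝓝 0)

/-- A net is *j-convergent* if `lim_m limsup_n ‖a n − j n m (a m)‖ = 0`. -/
def JConv (j : ∀ n m, E m →L[ℂ] E n) (a : ∀ n, E n) : Prop :=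
  Tendsto (fun m => limsup (fun n => ‖a n - j n m (a m)‖) atTop) atTop (𝓝 0)

/-- A net is *null* if its norms tend to zero along the directed index set. -/
def IsNullNet (a : ∀ n, E n) : Prop :=
  Tendsto (fun n => ‖a n‖) atTop (𝓝 0)

end SoftSystems

/-- **universal property.** If `α n : E n → F` are linear contractions into a
Banach space `F` mapping j-convergent nets to Cauchy nets, then there is a unique linear
contraction `α_∞` on the limit space `E_∞ = C(E,j)/C₀(E)` with
`α_∞ (j-lim a) = lim_n α n (a n)` for all j-convergent nets `a`. -/
theorem stmt7 {ι : Type*} [Preorder ι] [Nonempty ι] [IsDirected ι (· ≤ ·)]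
    {E : ι → Type*} [∀ n, NormedAddCommGroup (E n)] [∀ n, NormedSpace ℂ (E n)]
    (j : ∀ n m, E m →L[ℂ] E n) (hj : IsSoftSystem j)
    (C : Submodule ℂ (lp E ⊤)) (C₀ : Submodule ℂ (lp E ⊤))
    (hC : (C : Set (lp E ⊤)) = {f : lp E ⊤ | JConv j (fun n => f n)})
    (hC₀ : (C₀ : Set (lp E ⊤)) = {f : lp E ⊤ | IsNullNet (fun n => f n)})
    {F : Type*} [NormedAddCommGroup F] [NormedSpace ℂ F] [CompleteSpace F]
    (α : ∀ n, E n →L[ℂ] F) (hα : ∀ n, ‖α n‖ ≤ 1)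
    (hCauchy : ∀ f : lp E ⊤, JConv j (fun n => f n) →
      Cauchy (Filter.map (fun n => α n (f n)) atTop)) :
    ∃! αinf : (C ⧸ (C₀.comap C.subtype)) →L[ℂ] F,
      ‖αinf‖ ≤ 1 ∧
      ∀ a : C, Tendsto (fun n => α n ((a : lp E ⊤) n)) atTop
        (𝓝 (αinf (Submodule.Quotient.mk a))) := by
  have hne : (atTop : Filter ι).NeBot := atTop_neBot_iff.mpr ⟨‹_›, ‹_›⟩
  have key : ∀ a : C, ∃ x : F,
      Tendsto (fun n => α n ((a : lp E ⊤) n)) atTop (𝓝 x) := by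
    intro a
    have hconv : JConv j (fun n => (a : lp E ⊤) n) := by
      have h := a.2
      rw [← SetLike.mem_coe, hC] at h
      exact h
    exact CompleteSpace.complete (hCauchy _ hconv)
  choose L hL using key
  have Ladd : ∀ a b : C, L (a + b) = L a + L b := by
    intro a b
    refine tendsto_nhds_unique (hL (a + b)) (((hL a).add (hL b)).congr fun n => ?_)
    simp
  have Lsmul : ∀ (c : ℂ) (a : C), L (c • a) = c • L a := by
    intro c a
    refine tendsto_nhds_unique (hL (c • a)) (((hL a).const_smul c).congr fun n => ?_)
    simp
  set Lhat : C →ₗ[ℂ] F :=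
    { toFun := L, map_add' := Ladd, map_smul' := Lsmul } with hLhat
  have hbound : ∀ a : C, ‖L a‖ ≤ ‖a‖ := by
    intro a
    refine le_of_tendsto' (hL a).norm fun n => ?_
    calc ‖α n ((a : lp E ⊤) n)‖ ≤ 1 * ‖(a : lp E ⊤) n‖ :=
          (α n).le_of_opNorm_le (hα n) _
      _ = ‖(a : lp E ⊤) n‖ := one_mul _
      _ ≤ ‖(a : lp E ⊤)‖ := lp.norm_apply_le_norm ENNReal.top_ne_zero _ n
  have hker : C₀.comap C.subtype ≤ LinearMap.ker Lhat := by
    intro a ha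
    have hnull : IsNullNet (fun n => (a : lp E ⊤) n) := by
      have h : (a : lp E ⊤) ∈ C₀ := ha
      rw [← SetLike.mem_coe, hC₀] at h
      exact h
    have h0 : Tendsto (fun n => α n ((a : lp E ⊤) n)) atTop (𝓝 0) := by
      refine squeeze_zero_norm (fun n => ?_) hnull
      calc ‖α n ((a : lp E ⊤) n)‖ ≤ 1 * ‖(a : lp E ⊤) n‖ :=
            (α n).le_of_opNorm_le (hα n) _
        _ = ‖(a : lp E ⊤) n‖ := one_mul _
    exact tendsto_nhds_unique (hL a) h0
  set αlin : (C ⧸ (C₀.comap C.subtype)) →ₗ[ℂ] F :=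
    Submodule.liftQ (C₀.comap C.subtype) Lhat hker with hαlin
  have hαlin_bound : ∀ x : C ⧸ (C₀.comap C.subtype), ‖αlin x‖ ≤ 1 * ‖x‖ := by
    intro x
    rw [one_mul]
    refine le_of_forall_pos_le_add fun ε hε => ?_
    obtain ⟨m, rfl, hm⟩ := Submodule.Quotient.norm_mk_lt x hε
    calc ‖αlin (Submodule.Quotient.mk m)‖ = ‖L m‖ := by
          rw [hαlin, Submodule.liftQ_apply]; rfl
      _ ≤ ‖m‖ := hbound m
      _ ≤ ‖(Submodule.Quotient.mk m : C ⧸ (C₀.comap C.subtype))‖ + ε := hm.le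
  set αinf : (C ⧸ (C₀.comap C.subtype)) →L[ℂ] F :=
    αlin.mkContinuous 1 hαlin_bound with hαinf
  have happly : ∀ a : C, αinf (Submodule.Quotient.mk a) = L a := by
    intro a
    show αlin (Submodule.Quotient.mk a) = L a
    rw [hαlin, Submodule.liftQ_apply]; rfl
  refine ⟨αinf, ⟨csInf_le ⟨0, fun _ h => h.1⟩ ⟨zero_le_one, hαlin_bound⟩, fun a => ?_⟩, ?_⟩
  · rw [happly]; exact hL a
  · rintro β ⟨-, hβ2⟩
    ext x
    obtain ⟨a, rfl⟩ := Submodule.Quotient.mk_surjective _ x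
    rw [happly]
    exact tendsto_nhds_unique (hβ2 a) (hL a)
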